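/- Let F be the free group on a, b, and f* = 3·δ_1 - δ_{a⁻¹} - δ_{b⁻¹} ∈ ℓ¹(F,ℝ). Let N be the set of all elements of F expressible as words in a⁻¹ and b⁻¹ only (including the identity). Then (f*)⁻¹ = (1/3)∑_{s∈N} 3^{-|s|} δ_s, where |s| is the word length, and in particular every coordinate of (f*)⁻¹ lies in [0, 1/3] and the coordinates sum to 1. -/

import Mathlib

open FreeGroup
open scoped Classical

/-- `f* = 3·δ₁ - δ_{a⁻¹} - δ_{b⁻¹}` on the free group of rank 2, as a function. -/
noncomputable def fstarF : FreeGroup Bool → ℝ :=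
  fun s => 3 * (if s = 1 then 1 else 0) -
    (if s = (FreeGroup.of true)⁻¹ then 1 else 0) -
    (if s = (FreeGroup.of false)⁻¹ then 1 else 0)

/-- The candidate inverse `(1/3)∑_{s∈N} 3^{-|s|} δ_s`, where `N` is the free monoid
generated by `a⁻¹, b⁻¹` inside `F`. -/
noncomputable def wDelta : FreeGroup Bool → ℝ := fun s =>
  if s ∈ Submonoid.closure ({(FreeGroup.of true)⁻¹, (FreeGroup.of false)⁻¹} : Set (FreeGroup Bool))
  then (1 / 3) * (1 / 3 : ℝ) ^ (FreeGroup.norm s) else 0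

namespace WDInv

/-- The free monoid on `a⁻¹, b⁻¹` inside the free group. -/
abbrev N : Submonoid (FreeGroup Bool) :=
  Submonoid.closure ({(FreeGroup.of true)⁻¹, (FreeGroup.of false)⁻¹} : Set (FreeGroup Bool))

/-- The embedding of lists of letters as elements of `N`. -/
def e (l : List Bool) : FreeGroup Bool := FreeGroup.mk (l.map fun c => (c, false))

lemma inv_of (c : Bool) : (FreeGroup.of c)⁻¹ = FreeGroup.mk [(c, false)] := by
  rw [FreeGroup.of, FreeGroup.inv_mk]; rfl

lemma e_nil : e [] = 1 := rfl

lemma e_cons (c : Bool) (l : List Bool) : e (c :: l) = (FreeGroup.of c)⁻¹ * e l := by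
  rw [inv_of, e, e, FreeGroup.mul_mk, List.map_cons, List.singleton_append]

lemma e_append (l m : List Bool) : e (l ++ m) = e l * e m := by
  rw [e, e, e, FreeGroup.mul_mk, List.map_append]

lemma e_concat (l : List Bool) (c : Bool) : e (l ++ [c]) = e l * (FreeGroup.of c)⁻¹ := by
  rw [e_append, e_cons, e_nil, mul_one]

lemma toWord_e (l : List Bool) : (e l).toWord = l.map fun c => (c, false) := by
  induction l with
  | nil => rfl
  | cons c l ih =>
    have h : FreeGroup.reduce (l.map fun c => (c, false)) = l.map fun c => (c, false) := by
      rw [← FreeGroup.toWord_mk]; exact ih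
    rw [e, FreeGroup.toWord_mk, List.map_cons, FreeGroup.reduce.cons, h]
    cases l with
    | nil => rfl
    | cons d m => simp

lemma e_inj : Function.Injective e := by
  intro l m h
  have h2 : (e l).toWord = (e m).toWord := by rw [h]
  rw [toWord_e, toWord_e] at h2
  exact List.map_injective_iff.2 (fun a b hab => congrArg Prod.fst hab) h2

lemma norm_e (l : List Bool) : (e l).norm = l.length := by
  rw [FreeGroup.norm, toWord_e, List.length_map]

lemma mem_N (s : FreeGroup Bool) : s ∈ N ↔ ∃ l, e l = s := by
  constructor
  · intro hs
    induction hs using Submonoid.closure_induction with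
    | mem x hx =>
      rcases hx with rfl | rfl
      · exact ⟨[true], by rw [e_cons, e_nil, mul_one]⟩
      · exact ⟨[false], by rw [e_cons, e_nil, mul_one]⟩
    | one => exact ⟨[], rfl⟩
    | mul x y _ _ hx hy =>
      rcases hx with ⟨l, rfl⟩
      rcases hy with ⟨m, rfl⟩
      exact ⟨l ++ m, e_append l m⟩
  · rintro ⟨l, rfl⟩
    induction l with
    | nil => exact one_mem N
    | cons c m ih =>
      rw [e_cons]
      refine mul_mem (Submonoid.subset_closure ?_) ih
      cases c
      · exact Or.inr rfl
      · exact Or.inl rfl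

lemma wDelta_e (l : List Bool) : wDelta (e l) = (1 / 3) * (1 / 3 : ℝ) ^ l.length := by
  rw [wDelta]
  rw [if_pos (show e l ∈ N from (mem_N _).2 ⟨l, rfl⟩), norm_e]

lemma wDelta_of_not_mem {s : FreeGroup Bool} (h : s ∉ N) : wDelta s = 0 := by
  rw [wDelta, if_neg h]

lemma inv_of_mem (c : Bool) : (FreeGroup.of c)⁻¹ ∈ N := by
  refine Submonoid.subset_closure ?_
  cases c
  · exact Or.inr rfl
  · exact Or.inl rfl

lemma of_ne_one (c : Bool) : FreeGroup.of c ≠ (1 : FreeGroup Bool) := by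
  intro h
  have := congrArg FreeGroup.toWord h
  simp at this

lemma inv_of_ne_one (c : Bool) : (FreeGroup.of c)⁻¹ ≠ (1 : FreeGroup Bool) := by
  simpa using of_ne_one c

lemma inv_of_injective : (FreeGroup.of true : FreeGroup Bool)⁻¹ ≠ (FreeGroup.of false)⁻¹ := by
  intro h
  simpa using FreeGroup.of_injective (inv_injective h)

/-- `of c * s ∉ N` whenever `s ∉ N`. -/
lemma not_mem_of_mul {s : FreeGroup Bool} (c : Bool) (h : s ∉ N) :
    FreeGroup.of c * s ∉ N := by
  intro hm
  apply h
  have : (FreeGroup.of c)⁻¹ * (FreeGroup.of c * s) ∈ N := mul_mem (inv_of_mem c) hm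
  rwa [inv_mul_cancel_left] at this

lemma of_mul_e_cons (c : Bool) (l : List Bool) : FreeGroup.of c * e (c :: l) = e l := by
  rw [e_cons, ← mul_assoc, mul_inv_cancel, one_mul]

lemma of_not_mem (c : Bool) : FreeGroup.of c ∉ N := by
  intro h
  rcases (mem_N _).1 h with ⟨l, hl⟩
  have := congrArg FreeGroup.toWord hl
  rw [toWord_e, FreeGroup.toWord_of] at this
  cases l with
  | nil => simp at this
  | cons d m => simp at this

lemma of_mul_e_not_mem {c c' : Bool} (h : c ≠ c') (l : List Bool) :
    FreeGroup.of c * e (c' :: l) ∉ N := by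
  intro hm
  rcases (mem_N _).1 hm with ⟨m, hm'⟩
  have : e (c' :: l) = e (c :: m) := by
    rw [e_cons c m, hm', inv_mul_cancel_left]
  exact h (List.cons.injEq _ _ _ _ ▸ (e_inj this)).1.symm

lemma e_mul_of_concat (l : List Bool) (c : Bool) : e (l ++ [c]) * FreeGroup.of c = e l := by
  rw [e_concat, mul_assoc, inv_mul_cancel, mul_one]

lemma e_mul_of_not_mem {c c' : Bool} (h : c ≠ c') (l : List Bool) :
    e (l ++ [c']) * FreeGroup.of c ∉ N := by
  intro hm
  rcases (mem_N _).1 hm with ⟨m, hm'⟩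
  have : e (l ++ [c']) = e (m ++ [c]) := by
    rw [e_concat m c, hm', mul_assoc, mul_inv_cancel, mul_one]
  have h2 := e_inj this
  have := (List.append_inj' h2 rfl).2
  simp at this
  exact h this.symm

lemma mul_of_not_mem {s : FreeGroup Bool} (c : Bool) (h : s ∉ N) :
    s * FreeGroup.of c ∉ N := by
  intro hm
  apply h
  have : (s * FreeGroup.of c) * (FreeGroup.of c)⁻¹ ∈ N := mul_mem hm (inv_of_mem c)
  rwa [mul_inv_cancel_right] at this

lemma e_ne_one_cons (c : Bool) (l : List Bool) : e (c :: l) ≠ 1 := by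
  intro h
  have := e_inj (show e (c :: l) = e [] from h.trans e_nil.symm)
  simp at this

lemma e_ne_one_concat (l : List Bool) (c : Bool) : e (l ++ [c]) ≠ 1 := by
  intro h
  have := e_inj (show e (l ++ [c]) = e [] from h.trans e_nil.symm)
  simp at this

/-- The key left-convolution recursion. -/
lemma left_step (s : FreeGroup Bool) :
    3 * wDelta s - wDelta (FreeGroup.of true * s) - wDelta (FreeGroup.of false * s) =
      if s = 1 then 1 else 0 := by
  by_cases hs : s ∈ N
  · rcases (mem_N _).1 hs with ⟨l, rfl⟩
    cases l with
    | nil =>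
      rw [e_nil, if_pos rfl, mul_one, mul_one, wDelta, if_pos (one_mem N)]
      rw [wDelta_of_not_mem (of_not_mem true), wDelta_of_not_mem (of_not_mem false)]
      simp [FreeGroup.norm_one]
    | cons c l' =>
      rw [if_neg (e_ne_one_cons c l'), wDelta_e]
      cases c
      · rw [of_mul_e_cons false l', wDelta_e,
          wDelta_of_not_mem (of_mul_e_not_mem (by simp) l')]
        rw [List.length_cons, pow_succ]
        ring
      · rw [of_mul_e_cons true l', wDelta_e,
          wDelta_of_not_mem (of_mul_e_not_mem (by simp) l')]
        rw [List.length_cons, pow_succ]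
        ring
  · have h1 : s ≠ 1 := fun h => hs (h ▸ one_mem N)
    rw [if_neg h1, wDelta_of_not_mem hs,
      wDelta_of_not_mem (not_mem_of_mul true hs),
      wDelta_of_not_mem (not_mem_of_mul false hs)]
    ring

/-- The key right-convolution recursion. -/
lemma right_step (s : FreeGroup Bool) :
    3 * wDelta s - wDelta (s * FreeGroup.of true) - wDelta (s * FreeGroup.of false) =
      if s = 1 then 1 else 0 := by
  by_cases hs : s ∈ N
  · rcases (mem_N _).1 hs with ⟨l, rfl⟩
    rcases List.eq_nil_or_concat l with rfl | ⟨l', c, rfl⟩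
    · rw [e_nil, if_pos rfl, one_mul, one_mul, wDelta, if_pos (one_mem N)]
      rw [wDelta_of_not_mem (of_not_mem true), wDelta_of_not_mem (of_not_mem false)]
      simp [FreeGroup.norm_one]
    · simp only [List.concat_eq_append]
      rw [if_neg (e_ne_one_concat l' c), wDelta_e]
      cases c
      · rw [e_mul_of_concat l' false, wDelta_e,
          wDelta_of_not_mem (e_mul_of_not_mem (by simp) l')]
        rw [List.length_append, List.length_singleton, pow_succ]
        ring
      · rw [e_mul_of_concat l' true, wDelta_e,
          wDelta_of_not_mem (e_mul_of_not_mem (by simp) l')]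
        rw [List.length_append, List.length_singleton, pow_succ]
        ring
  · have h1 : s ≠ 1 := fun h => hs (h ▸ one_mem N)
    rw [if_neg h1, wDelta_of_not_mem hs,
      wDelta_of_not_mem (mul_of_not_mem true hs),
      wDelta_of_not_mem (mul_of_not_mem false hs)]
    ring

lemma fstarF_one : fstarF 1 = 3 := by
  rw [fstarF]
  rw [if_pos rfl, if_neg (inv_of_ne_one true).symm, if_neg (inv_of_ne_one false).symm]
  norm_num

lemma fstarF_inv_of_true : fstarF (FreeGroup.of true)⁻¹ = -1 := by
  rw [fstarF]
  rw [if_neg (inv_of_ne_one true), if_pos rfl, if_neg inv_of_injective]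
  norm_num

lemma fstarF_inv_of_false : fstarF (FreeGroup.of false)⁻¹ = -1 := by
  rw [fstarF]
  rw [if_neg (inv_of_ne_one false), if_neg (Ne.symm inv_of_injective), if_pos rfl]
  norm_num

lemma fstarF_eq_zero {t : FreeGroup Bool} (h1 : t ≠ 1)
    (h2 : t ≠ (FreeGroup.of true)⁻¹) (h3 : t ≠ (FreeGroup.of false)⁻¹) : fstarF t = 0 := by
  rw [fstarF, if_neg h1, if_neg h2, if_neg h3]
  norm_num

end WDInv

open WDInv

theorem wDelta_is_inverse_of_fstar :
    Summable wDelta ∧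
    (∀ s, ∑' t, wDelta t * fstarF (t⁻¹ * s) = if s = 1 then 1 else 0) ∧
    (∀ s, ∑' t, fstarF t * wDelta (t⁻¹ * s) = if s = 1 then 1 else 0) ∧
    (∀ s, 0 ≤ wDelta s ∧ wDelta s ≤ 1 / 3) ∧
    (∑' s, wDelta s) = 1 := by
  -- summability through the parametrization by lists
  have hrange : ∀ x ∉ Set.range e, wDelta x = 0 := by
    intro x hx
    refine wDelta_of_not_mem ?_
    intro hm
    rcases (mem_N x).1 hm with ⟨l, hl⟩
    exact hx ⟨l, hl⟩
  have hcomp : (wDelta ∘ e) = fun l : List Bool => (1 / 3) * (1 / 3 : ℝ) ^ l.length := by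
    funext l; exact wDelta_e l
  -- summability on the sigma type
  set σ := (List.equivSigmaTuple (α := Bool))
  have hF0 : ∀ p : Σ n : ℕ, Fin n → Bool, (0 : ℝ) ≤ (1 / 3) * (1 / 3 : ℝ) ^ p.1 := by
    intro p; positivity
  have hfiber : ∀ n : ℕ, (∑' _ : Fin n → Bool, (1 / 3) * (1 / 3 : ℝ) ^ n)
      = (1 / 3) * (2 / 3 : ℝ) ^ n := by
    intro n
    rw [tsum_fintype, Finset.sum_const, Finset.card_univ, Fintype.card_fun]
    simp only [Fintype.card_fin, Fintype.card_bool, nsmul_eq_mul]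
    push_cast
    rw [div_pow, div_pow]
    ring
  have hgeo : Summable fun n : ℕ => (1 / 3) * (2 / 3 : ℝ) ^ n :=
    (summable_geometric_of_lt_one (by norm_num) (by norm_num)).mul_left _
  have hFsum : Summable fun p : Σ n : ℕ, Fin n → Bool => (1 / 3) * (1 / 3 : ℝ) ^ p.1 := by
    rw [summable_sigma_of_nonneg hF0]
    constructor
    · intro n; exact (hasSum_fintype _).summable
    · exact hgeo.congr fun n => (hfiber n).symm
  have hFσ : ∀ l : List Bool,
      ((1 / 3) * (1 / 3 : ℝ) ^ (σ l).1) = (1 / 3) * (1 / 3 : ℝ) ^ l.length := by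
    intro l; rfl
  have hsum_comp : Summable (wDelta ∘ e) := by
    rw [hcomp, ← σ.summable_iff (f := fun p : Σ n : ℕ, Fin n → Bool =>
      (1 / 3) * (1 / 3 : ℝ) ^ p.1)] at *
    exact hFsum.congr hFσ
  have hsummable : Summable wDelta := (e_inj.summable_iff hrange).1 hsum_comp
  -- total sum
  have htotal : (∑' s, wDelta s) = 1 := by
    have h1 : (∑' l : List Bool, wDelta (e l)) = ∑' s, wDelta s :=
      e_inj.tsum_eq (by
        intro x hx
        by_contra hr
        exact hx (hrange x hr))
    have h2 : (∑' l : List Bool, wDelta (e l))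
        = ∑' p : Σ n : ℕ, Fin n → Bool, (1 / 3) * (1 / 3 : ℝ) ^ p.1 := by
      rw [← σ.tsum_eq (f := fun p : Σ n : ℕ, Fin n → Bool => (1 / 3) * (1 / 3 : ℝ) ^ p.1)]
      exact tsum_congr fun l => (wDelta_e l).trans (hFσ l).symm
    have h3 : (∑' p : Σ n : ℕ, Fin n → Bool, (1 / 3) * (1 / 3 : ℝ) ^ p.1) = 1 := by
      rw [hFsum.tsum_sigma]
      calc (∑' (n : ℕ) (_ : Fin n → Bool), (1 / 3) * (1 / 3 : ℝ) ^ n)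
          = ∑' n : ℕ, (1 / 3) * (2 / 3 : ℝ) ^ n := tsum_congr fun n => hfiber n
        _ = (1 / 3) * ∑' n : ℕ, (2 / 3 : ℝ) ^ n := tsum_mul_left
        _ = 1 := by
            rw [tsum_geometric_of_lt_one (by norm_num) (by norm_num)]
            norm_num
    rw [← h1, h2, h3]
  refine ⟨hsummable, ?_, ?_, ?_, htotal⟩
  · -- first convolution identity
    intro s
    have hne1 : s ≠ s * FreeGroup.of true := by
      intro h
      exact WDInv.of_ne_one true ((left_eq_mul).1 h)
    have hne2 : s ≠ s * FreeGroup.of false := by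
      intro h
      exact WDInv.of_ne_one false ((left_eq_mul).1 h)
    have hne3 : s * FreeGroup.of true ≠ s * FreeGroup.of false := by
      intro h
      have := mul_left_cancel h
      simpa using FreeGroup.of_injective this
    have hfin : ∀ t ∉ ({s, s * FreeGroup.of true, s * FreeGroup.of false} :
        Finset (FreeGroup Bool)), wDelta t * fstarF (t⁻¹ * s) = 0 := by
      intro t ht
      simp only [Finset.mem_insert, Finset.mem_singleton, not_or] at ht
      obtain ⟨ht1, ht2, ht3⟩ := ht
      have h1 : t⁻¹ * s ≠ 1 := by
        intro h
        exact ht1 (inv_mul_eq_one.1 h)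
      have h2 : t⁻¹ * s ≠ (FreeGroup.of true)⁻¹ := by
        intro h
        apply ht2
        have := congrArg (fun x => t * x * FreeGroup.of true) h
        simpa [mul_assoc] using this.symm
      have h3 : t⁻¹ * s ≠ (FreeGroup.of false)⁻¹ := by
        intro h
        apply ht3
        have := congrArg (fun x => t * x * FreeGroup.of false) h
        simpa [mul_assoc] using this.symm
      rw [fstarF_eq_zero h1 h2 h3, mul_zero]
    rw [tsum_eq_sum hfin]
    rw [Finset.sum_insert (by simp [hne1, hne2]),
      Finset.sum_insert (by simp [hne3]), Finset.sum_singleton]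
    have e1 : s⁻¹ * s = 1 := inv_mul_cancel s
    have e2 : (s * FreeGroup.of true)⁻¹ * s = (FreeGroup.of true)⁻¹ := by
      rw [mul_inv_rev, mul_assoc, inv_mul_cancel, mul_one]
    have e3 : (s * FreeGroup.of false)⁻¹ * s = (FreeGroup.of false)⁻¹ := by
      rw [mul_inv_rev, mul_assoc, inv_mul_cancel, mul_one]
    rw [e1, e2, e3, fstarF_one, fstarF_inv_of_true, fstarF_inv_of_false]
    rw [← right_step s]
    ring
  · -- second convolution identity
    intro s
    have hfin : ∀ t ∉ ({1, (FreeGroup.of true)⁻¹, (FreeGroup.of false)⁻¹} :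
        Finset (FreeGroup Bool)), fstarF t * wDelta (t⁻¹ * s) = 0 := by
      intro t ht
      simp only [Finset.mem_insert, Finset.mem_singleton, not_or] at ht
      obtain ⟨ht1, ht2, ht3⟩ := ht
      rw [fstarF_eq_zero ht1 ht2 ht3, zero_mul]
    rw [tsum_eq_sum hfin]
    rw [Finset.sum_insert (by simp [(inv_of_ne_one true).symm, (inv_of_ne_one false).symm]),
      Finset.sum_insert (by
        simp only [Finset.mem_singleton]
        exact inv_of_injective), Finset.sum_singleton]
    rw [fstarF_one, fstarF_inv_of_true, fstarF_inv_of_false]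
    rw [inv_one, one_mul, inv_inv, inv_inv]
    rw [← left_step s]
    ring
  · -- bounds
    intro s
    rw [wDelta]
    split
    · constructor
      · positivity
      · have hle : (1 / 3 : ℝ) ^ FreeGroup.norm s ≤ 1 :=
          pow_le_one₀ (by norm_num) (by norm_num)
        nlinarith
    · norm_num
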